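/- arXiv:1707.03631 — 2 statements merged into one kernel-verified Lean document; each statement's English description precedes it below -/
import Mathlib

section
/- Let l(w) = Σᵢ (yᵢ − xᵢᵀw)² be the linear regression loss and let rᵢ = δ·sign(∇_{xᵢ} l(w)) be the FGSM adversarial perturbation of data point xᵢ. Then the adversarially perturbed loss Σᵢ (yᵢ − (xᵢ + rᵢ)ᵀw)² equals l(w) + Σᵢⱼ |δ·∂l/∂x_{ij}(w)| + δ²·wᵀ Γ w, where Γ = Σᵢ sign(∇_{xᵢ} l(w)) sign(∇_{xᵢ} l(w))ᵀ. -/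
open Finset in
/-- FGSM-perturbed linear regression loss decomposition:
`l_AT(w) = l(w) + Σᵢⱼ |δ ∂l/∂x_{ij}| + δ² wᵀΓw` with
`Γ = Σᵢ sign(∇_{xᵢ}l) sign(∇_{xᵢ}l)ᵀ`, so `wᵀΓw = Σᵢ (sign(∇_{xᵢ}l)ᵀw)²`. -/
theorem adversarial_training_decomposition (N D : ℕ)
    (x : Fin N → Fin D → ℝ) (y : Fin N → ℝ) (w : Fin D → ℝ) (δ : ℝ) (hδ : 0 ≤ δ)
    (l : (Fin D → ℝ) → ℝ) (hl : l = fun w => ∑ i, (y i - ∑ j, x i j * w j) ^ 2)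
    (g : Fin N → Fin D → ℝ)
    (hg : g = fun i j => -2 * (y i - ∑ j', x i j' * w j') * w j)
    (r : Fin N → Fin D → ℝ)
    (hr : r = fun i j => δ * Real.sign (g i j)) :
    ∑ i, (y i - ∑ j, (x i j + r i j) * w j) ^ 2 =
      l w + (∑ i, ∑ j, |δ * g i j|)
        + δ ^ 2 * ∑ i, (∑ j, Real.sign (g i j) * w j) ^ 2 := by
  have key : ∀ a : ℝ, a * Real.sign a = |a| := fun a => by
    rcases lt_trichotomy a 0 with h|h|h
    · simp [Real.sign_of_neg h, abs_of_neg h]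
    · simp [h]
    · simp [Real.sign_of_pos h, abs_of_pos h]
  subst hl hg hr
  simp only [Finset.mul_sum, ← Finset.sum_add_distrib]
  apply Finset.sum_congr rfl
  intro i _
  set e := y i - ∑ j', x i j' * w j' with he
  set S := ∑ j, Real.sign (-2 * e * w j) * w j with hS
  have h1 : ∑ j, (x i j + δ * Real.sign (-2 * e * w j)) * w j
      = (∑ j, x i j * w j) + δ * S := by
    rw [hS, Finset.mul_sum, ← Finset.sum_add_distrib]
    exact Finset.sum_congr rfl fun j _ => by ring
  have h2 : y i - ((∑ j, x i j * w j) + δ * S) = e - δ * S := by rw [he]; ring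
  rw [h1, h2]
  have h3 : ∑ j, |δ * (-2 * e * w j)| = δ * ((-2 * e) * S) := by
    rw [hS, Finset.mul_sum, Finset.mul_sum]
    refine Finset.sum_congr rfl fun j _ => ?_
    rw [abs_mul, abs_of_nonneg hδ, ← key (-2 * e * w j)]
    ring
  rw [h3]; ring
end

section
/- Let l(w) = Σᵢ (yᵢ − xᵢᵀw)² with gradient ∂l/∂x_{ij}(w) = −2(yᵢ − xᵢᵀw)wⱼ, and suppose for each i the dropped set Sᵢ ⊆ {1,…,D} satisfies x_{ij}·∂l/∂x_{ij}(w) ≤ 0 for all j ∈ Sᵢ. Define ε^{adv}_{ij} = 0 if j ∈ Sᵢ and 1 otherwise. Then Σᵢ (yᵢ − (ε^{adv}ᵢ ⊙ xᵢ)ᵀw)² = l(w) + Σᵢ Σ_{j∈Sᵢ} |x_{ij}·∂l/∂x_{ij}(w)| + wᵀ Γ w, where Γ = Σᵢ ((1 − ε^{adv}ᵢ) ⊙ xᵢ)((1 − ε^{adv}ᵢ) ⊙ xᵢ)ᵀ. -/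
/-- Adversarial dropout decomposition for linear regression. -/
theorem adversarial_dropout_decomposition (N D : ℕ)
    (x : Fin N → Fin D → ℝ) (y : Fin N → ℝ) (w : Fin D → ℝ)
    (S : Fin N → Finset (Fin D))
    (l : (Fin D → ℝ) → ℝ) (hl : l = fun w => ∑ i, (y i - ∑ j, x i j * w j) ^ 2)
    (g : Fin N → Fin D → ℝ)
    (hg : g = fun i j => -2 * (y i - ∑ j', x i j' * w j') * w j)
    (hS : ∀ i, ∀ j ∈ S i, x i j * g i j ≤ 0)
    (ε : Fin N → Fin D → ℝ)
    (hε : ε = fun i j => if j ∈ S i then 0 else 1) :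
    ∑ i, (y i - ∑ j, (ε i j * x i j) * w j) ^ 2 =
      l w + (∑ i, ∑ j ∈ S i, |x i j * g i j|)
        + ∑ i, (∑ j, ((1 - ε i j) * x i j) * w j) ^ 2 := by
  subst hl hg hε
  rw [← Finset.sum_add_distrib, ← Finset.sum_add_distrib]
  apply Finset.sum_congr rfl
  intro i _
  set A := ∑ j, x i j * w j with hA
  have hB : ∀ j : Fin D, ((if j ∈ S i then 0 else (1:ℝ)) * x i j * w j)
      = x i j * w j - (if j ∈ S i then x i j * w j else 0) := by
    intro j; split <;> ring
  have hB' : ∀ j : Fin D, ((1 - if j ∈ S i then 0 else (1:ℝ)) * x i j * w j)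
      = (if j ∈ S i then x i j * w j else 0) := by
    intro j; split <;> ring
  have hmem : (∑ j, (if j ∈ S i then x i j * w j else 0)) = ∑ j ∈ S i, x i j * w j := by
    rw [Finset.sum_ite_mem, Finset.univ_inter]
  simp only [hB, hB', Finset.sum_sub_distrib, hmem]
  have habs : (∑ j ∈ S i, |x i j * (-2 * (y i - A) * w j)|)
      = 2 * (y i - A) * ∑ j ∈ S i, x i j * w j := by
    rw [Finset.mul_sum]
    apply Finset.sum_congr rfl
    intro j hj
    rw [abs_of_nonpos (hS i j hj)]
    ring
  rw [habs]
  ring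
end
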